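/- For every integer n ≥ 1, m_{4n} = 2n − 1 + m_{n+1}, where m_k (resp. M_k) is the minimum (resp. maximum) number of alternations among length-k factors of the Thue–Morse sequence. -/

import Mathlib

/-- The reduction of a word: replace each maximal run of identical characters
by a single character. -/
def red {α : Type*} [DecidableEq α] (w : List α) : List α :=
  w.destutter (· ≠ ·)

/-- The length-`k` factor of the infinite sequence `x` (1-indexed) starting at
position `i`. -/
def factorAt {α : Type*} (x : ℕ → α) (i k : ℕ) : List α :=
  (List.range k).map (fun j => x (i + j))

/-- The reduced factor complexity: the number of length-`n` factors of `x`,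
counted up to reduced-equivalence (`red v = red w`). -/
noncomputable def redFactorComplexity {α : Type*} [DecidableEq α]
    (x : ℕ → α) (n : ℕ) : ℕ :=
  Set.ncard { u : List α | ∃ i ≥ 1, u = red (factorAt x i n) }

/-- The Thue–Morse sequence (1-indexed): `t n` is the parity of the number of
1's in the binary expansion of `n - 1`. -/
def thueMorse (n : ℕ) : Bool :=
  decide ((Nat.digits 2 (n - 1)).sum % 2 = 1)

/-- The number of alternations (occurrences of 01 or 10) in a binary word. -/
def alt (w : List Bool) : ℕ :=
  (List.zipWith (fun a b => a != b) w w.tail).count true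

/-- The minimum number of alternations among length-`k` factors of Thue–Morse. -/
noncomputable def tmAltMin (k : ℕ) : ℕ :=
  sInf { a : ℕ | ∃ i ≥ 1, a = alt (factorAt thueMorse i k) }

/-- The maximum number of alternations among length-`k` factors of Thue–Morse. -/
noncomputable def tmAltMax (k : ℕ) : ℕ :=
  sSup { a : ℕ | ∃ i ≥ 1, a = alt (factorAt thueMorse i k) }

/-- The Thue–Morse morphism `0 → 01`, `1 → 10`. -/
def mu (w : List Bool) : List Bool :=
  w.flatMap (fun b => if b then [true, false] else [false, true])

/-- The regular paperfolding sequence (1-indexed): writing `n = n' * 2^k` with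
`n'` odd, `f n = 1` iff `n' ≡ 3 (mod 4)`. -/
def paperfold (n : ℕ) : Bool :=
  decide ((n / 2 ^ (n.factorization 2)) % 4 = 3)

/-- The reduced abelian complexity: the number of length-`n` factors of `x`,
counted up to the equivalence identifying `v` and `w` whenever `red v` is a
rearrangement of the characters of `red w`. -/
noncomputable def redAbelianComplexity {α : Type*} [DecidableEq α]
    (x : ℕ → α) (n : ℕ) : ℕ :=
  Set.ncard { m : Multiset α | ∃ i ≥ 1, m = ↑(red (factorAt x i n)) }


section TMAux

private lemma fa_succ {α : Type*} (x : ℕ → α) (i k : ℕ) :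
    factorAt x i (k + 1) = x i :: factorAt x (i + 1) k := by
  unfold factorAt
  rw [List.range_succ_eq_map, List.map_cons, List.map_map]
  simp [Function.comp_def, Nat.add_comm, Nat.add_assoc, Nat.add_left_comm]

private lemma fa_snoc {α : Type*} (x : ℕ → α) (i k : ℕ) :
    factorAt x i (k + 1) = factorAt x i k ++ [x (i + k)] := by
  unfold factorAt
  rw [List.range_succ, List.map_append]
  rfl

private lemma fa_ne_nil {α : Type*} (x : ℕ → α) (i k : ℕ) (h : k ≠ 0) :
    factorAt x i k ≠ [] := by
  cases k with
  | zero => omega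
  | succ k => rw [fa_succ]; simp

private lemma fa_len {α : Type*} (x : ℕ → α) (i k : ℕ) :
    (factorAt x i k).length = k := by simp [factorAt]

private lemma gl_cons2 (a b : Bool) (l : List Bool) :
    (a :: b :: l).getLast! = (b :: l).getLast! := by
  rw [List.getLast!_cons_eq_getLastD, List.getLast!_cons_eq_getLastD, List.getLastD_cons]

private lemma hd_append (l l' : List Bool) (h : l ≠ []) : (l ++ l').head! = l.head! := by
  rcases l with _ | ⟨b, l⟩
  · exact absurd rfl h
  · rfl

private lemma alt_cons_cons (a b : Bool) (l : List Bool) :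
    alt (a :: b :: l) = (if a = b then 0 else 1) + alt (b :: l) := by
  simp only [alt, List.tail_cons, List.zipWith_cons_cons, List.count_cons]
  cases a <;> cases b <;> simp <;> omega

private lemma alt_single (a : Bool) : alt [a] = 0 := rfl

private lemma alt_cons' (c : Bool) (l : List Bool) (h : l ≠ []) :
    alt (c :: l) = (if c = l.head! then 0 else 1) + alt l := by
  rcases l with _ | ⟨b, l⟩
  · exact absurd rfl h
  · exact alt_cons_cons c b l

private lemma alt_snoc : ∀ (l : List Bool), l ≠ [] → ∀ d : Bool,
    alt (l ++ [d]) = alt l + (if l.getLast! = d then 0 else 1)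
  | [], h, d => absurd rfl h
  | [a], _, d => by
      simp [alt_cons_cons, alt_single, List.getLast!_cons_eq_getLastD, List.getLastD]
  | a :: b :: l, _, d => by
      have ih := alt_snoc (b :: l) (by simp) d
      rw [List.cons_append] at ih
      rw [List.cons_append, List.cons_append, alt_cons_cons, ih, alt_cons_cons, gl_cons2]
      omega

private lemma mu_nil : mu [] = [] := rfl

private lemma mu_cons (a : Bool) (l : List Bool) : mu (a :: l) = a :: (!a) :: mu l := by
  cases a <;> rfl

private lemma mu_ne_nil (l : List Bool) (h : l ≠ []) : mu l ≠ [] := by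
  rcases l with _ | ⟨a, l⟩
  · exact absurd rfl h
  · rw [mu_cons]; simp

private lemma hd_mu (l : List Bool) (h : l ≠ []) : (mu l).head! = l.head! := by
  rcases l with _ | ⟨a, l⟩
  · exact absurd rfl h
  · rw [mu_cons]; rfl

private lemma gl_mu : ∀ (l : List Bool), l ≠ [] → (mu l).getLast! = ! l.getLast!
  | [], h => absurd rfl h
  | [a], _ => by rw [mu_cons, mu_nil, List.getLast!_cons_eq_getLastD, List.getLast!_cons_eq_getLastD]; rfl
  | a :: b :: l, _ => by
      have ih := gl_mu (b :: l) (by simp)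
      have h2 : ((!a) :: mu (b :: l)).getLast! = (mu (b :: l)).getLast! := by
        rcases h : mu (b :: l) with _ | ⟨c, m⟩
        · exact absurd h (mu_ne_nil _ (by simp))
        · rw [gl_cons2]
      rw [mu_cons, gl_cons2, h2, ih, gl_cons2]

private lemma alt_mu : ∀ (l : List Bool), l ≠ [] → alt (mu l) + alt l + 1 = 2 * l.length
  | [], h => absurd rfl h
  | [a], _ => by cases a <;> simp [mu, alt, List.count_cons]
  | a :: b :: l, _ => by
      have ih := alt_mu (b :: l) (by simp)
      rw [mu_cons, alt_cons_cons] at ih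
      rw [mu_cons, mu_cons, alt_cons_cons, alt_cons_cons, alt_cons_cons,
        alt_cons_cons]
      simp only [List.length_cons] at *
      cases a <;> cases b <;> simp at * <;> omega

private lemma digits_sum_even (m : ℕ) :
    (Nat.digits 2 (2 * m)).sum = (Nat.digits 2 m).sum := by
  rcases Nat.eq_zero_or_pos m with h | h
  · simp [h]
  · rw [Nat.digits_def' (by norm_num : 1 < 2) (by omega)]
    simp [Nat.mul_div_cancel_left, Nat.mul_mod_right]

private lemma digits_sum_odd (m : ℕ) :
    (Nat.digits 2 (2 * m + 1)).sum = (Nat.digits 2 m).sum + 1 := by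
  rw [Nat.digits_def' (by norm_num : 1 < 2) (by omega)]
  have h1 : (2 * m + 1) % 2 = 1 := by omega
  have h2 : (2 * m + 1) / 2 = m := by omega
  rw [h1, h2]; simp; omega

private lemma tm_odd (j : ℕ) : thueMorse (2 * j + 1) = thueMorse (j + 1) := by
  unfold thueMorse
  rw [show 2 * j + 1 - 1 = 2 * j from rfl, show j + 1 - 1 = j from rfl, digits_sum_even]

private lemma tm_even (j : ℕ) : thueMorse (2 * j + 2) = ! thueMorse (j + 1) := by
  unfold thueMorse
  rw [show 2 * j + 2 - 1 = 2 * j + 1 from rfl, show j + 1 - 1 = j from rfl, digits_sum_odd]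
  rw [← decide_not]
  exact decide_eq_decide.mpr (by omega)

private lemma mu_fa : ∀ (k j : ℕ),
    factorAt thueMorse (2 * j + 1) (2 * k) = mu (factorAt thueMorse (j + 1) k)
  | 0, j => rfl
  | k + 1, j => by
      have ih := mu_fa k (j + 1)
      have e1 : 2 * (k + 1) = (2 * k + 1) + 1 := by ring
      have e2 : 2 * j + 1 + 1 = 2 * j + 2 := rfl
      have e3 : 2 * j + 1 + 1 + 1 = 2 * (j + 1) + 1 := by ring
      rw [e1, fa_succ, fa_succ, e3, ih, fa_succ, mu_cons, tm_odd, e2, tm_even]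

private lemma shapeA (j k : ℕ) :
    factorAt thueMorse (2 * j + 1) (2 * k + 1)
      = mu (factorAt thueMorse (j + 1) k) ++ [thueMorse (j + k + 1)] := by
  rw [fa_snoc, mu_fa, show 2 * j + 1 + 2 * k = 2 * (j + k) + 1 from by ring, tm_odd]

private lemma shapeB (j k : ℕ) :
    factorAt thueMorse (2 * j + 2) (2 * k + 1)
      = (!thueMorse (j + 1)) :: mu (factorAt thueMorse (j + 1 + 1) k) := by
  rw [fa_succ, show 2 * j + 2 + 1 = 2 * (j + 1) + 1 from by ring, mu_fa, tm_even]

private lemma shapeD (j k : ℕ) :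
    factorAt thueMorse (2 * j + 2) (2 * k + 2)
      = (!thueMorse (j + 1)) ::
          (mu (factorAt thueMorse (j + 1 + 1) k) ++ [thueMorse (j + k + 2)]) := by
  rw [show 2 * k + 2 = (2 * k + 1) + 1 from rfl, fa_succ,
    show 2 * j + 2 + 1 = 2 * (j + 1) + 1 from by ring, shapeA,
    show j + 1 + k + 1 = j + k + 2 from by ring, tm_even]

private lemma core1 (U : List Bool) (h : U ≠ []) (d : Bool) :
    alt (mu U ++ [d]) + alt (U ++ [d]) = 2 * U.length := by
  rw [alt_snoc (mu U) (mu_ne_nil U h), alt_snoc U h, gl_mu U h]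
  have h1 := alt_mu U h
  cases hg : U.getLast! <;> cases d <;> simp <;> omega

private lemma core2 (U : List Bool) (h : U ≠ []) (c : Bool) :
    alt ((!c) :: mu U) + alt (c :: U) = 2 * U.length := by
  rw [alt_cons' _ _ (mu_ne_nil U h), alt_cons' _ _ h, hd_mu U h]
  have h1 := alt_mu U h
  cases hg : U.head! <;> cases c <;> simp <;> omega

private lemma core3 (U : List Bool) (h : U ≠ []) (c d : Bool) :
    alt ((!c) :: (mu U ++ [d])) + alt (c :: (U ++ [d])) = 2 * U.length + 1 := by
  rw [alt_cons' _ _ (by simp : mu U ++ [d] ≠ []), alt_cons' _ _ (by simp [h] : U ++ [d] ≠ []),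
    hd_append (mu U) _ (mu_ne_nil U h), hd_append U _ h, hd_mu U h]
  have h1 := core1 U h d
  cases hg : U.head! <;> cases c <;> simp <;> omega

private lemma lemA (j k : ℕ) (hk : 1 ≤ k) :
    alt (factorAt thueMorse (2 * j + 1) (2 * k + 1))
      + alt (factorAt thueMorse (j + 1) (k + 1)) = 2 * k := by
  have hU : factorAt thueMorse (j + 1) k ≠ [] := fa_ne_nil _ _ _ (by omega)
  rw [shapeA, fa_snoc, show j + 1 + k = j + k + 1 from by ring]
  have := core1 (factorAt thueMorse (j + 1) k) hU (thueMorse (j + k + 1))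
  rwa [fa_len] at this

private lemma lemB (j k : ℕ) (hk : 1 ≤ k) :
    alt (factorAt thueMorse (2 * j + 2) (2 * k + 1))
      + alt (factorAt thueMorse (j + 1) (k + 1)) = 2 * k := by
  have hU : factorAt thueMorse (j + 1 + 1) k ≠ [] := fa_ne_nil _ _ _ (by omega)
  rw [shapeB, fa_succ]
  have := core2 (factorAt thueMorse (j + 1 + 1) k) hU (thueMorse (j + 1))
  rwa [fa_len] at this

private lemma lemC (j k : ℕ) (hk : 1 ≤ k) :
    alt (factorAt thueMorse (2 * j + 1) (2 * k))
      + alt (factorAt thueMorse (j + 1) k) + 1 = 2 * k := by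
  have hU : factorAt thueMorse (j + 1) k ≠ [] := fa_ne_nil _ _ _ (by omega)
  rw [mu_fa]
  have := alt_mu (factorAt thueMorse (j + 1) k) hU
  rwa [fa_len] at this

private lemma lemD (j k : ℕ) (hk : 1 ≤ k) :
    alt (factorAt thueMorse (2 * j + 2) (2 * k + 2))
      + alt (factorAt thueMorse (j + 1) (k + 2)) = 2 * k + 1 := by
  have hU : factorAt thueMorse (j + 1 + 1) k ≠ [] := fa_ne_nil _ _ _ (by omega)
  rw [shapeD, show k + 2 = (k + 1) + 1 from rfl, fa_succ, fa_snoc,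
    show j + 1 + 1 + k = j + k + 2 from by ring]
  have := core3 (factorAt thueMorse (j + 1 + 1) k) hU (thueMorse (j + 1))
    (thueMorse (j + k + 2))
  rw [fa_len] at this
  omega

private lemma lemAB (i : ℕ) (hi : 1 ≤ i) (k : ℕ) (hk : 1 ≤ k) :
    ∃ j ≥ 1, alt (factorAt thueMorse i (2 * k + 1))
      + alt (factorAt thueMorse j (k + 1)) = 2 * k := by
  rcases Nat.even_or_odd i with ⟨m, hm⟩ | ⟨m, hm⟩
  · obtain ⟨j, rfl⟩ : ∃ j, i = 2 * j + 2 := ⟨m - 1, by omega⟩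
    exact ⟨j + 1, by omega, lemB j k hk⟩
  · obtain rfl : i = 2 * m + 1 := by omega
    exact ⟨m + 1, by omega, lemA m k hk⟩

private lemma tmAltMin_le (k j : ℕ) (hj : 1 ≤ j) :
    tmAltMin k ≤ alt (factorAt thueMorse j k) :=
  Nat.sInf_le ⟨j, hj, rfl⟩

private lemma lem_lower (n : ℕ) (hn : 1 ≤ n) (i : ℕ) (hi : 1 ≤ i) :
    2 * n - 1 + tmAltMin (n + 1) ≤ alt (factorAt thueMorse i (4 * n)) := by
  rcases Nat.even_or_odd i with ⟨m, hm⟩ | ⟨m, hm⟩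
  · -- even position
    obtain ⟨j, rfl⟩ : ∃ j, i = 2 * j + 2 := ⟨m - 1, by omega⟩
    obtain ⟨p, rfl⟩ : ∃ p, n = p + 1 := ⟨n - 1, by omega⟩
    have hD := lemD j (2 * p + 1) (by omega)
    rw [show 2 * (2 * p + 1) + 2 = 4 * (p + 1) from by ring] at hD
    obtain ⟨j₂, hj₂, hAB⟩ := lemAB (j + 1) (by omega) (p + 1) (by omega)
    rw [show 2 * (p + 1) + 1 = 2 * p + 1 + 2 from by ring] at hAB
    have hmin := tmAltMin_le (p + 1 + 1) j₂ hj₂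
    omega
  · -- odd position
    obtain rfl : i = 2 * m + 1 := by omega
    have hC := lemC m (2 * n) (by omega)
    rw [show 2 * (2 * n) = 4 * n from by ring] at hC
    have hpre : alt (factorAt thueMorse (m + 1) (2 * n))
        ≤ alt (factorAt thueMorse (m + 1) (2 * n + 1)) := by
      rw [fa_snoc, alt_snoc _ (fa_ne_nil _ _ _ (by omega))]
      omega
    obtain ⟨j₂, hj₂, hAB⟩ := lemAB (m + 1) (by omega) n hn
    have hmin := tmAltMin_le (n + 1) j₂ hj₂
    omega

private lemma lem_upper (n : ℕ) (hn : 1 ≤ n) :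
    ∃ i ≥ 1, alt (factorAt thueMorse i (4 * n)) = 2 * n - 1 + tmAltMin (n + 1) := by
  have hne : {a : ℕ | ∃ i ≥ 1, a = alt (factorAt thueMorse i (n + 1))}.Nonempty :=
    ⟨alt (factorAt thueMorse 1 (n + 1)), 1, le_refl 1, rfl⟩
  obtain ⟨j₁, hj₁, hv⟩ := Nat.sInf_mem hne
  obtain ⟨j, rfl⟩ : ∃ j, j₁ = j + 1 := ⟨j₁ - 1, by omega⟩
  obtain ⟨p, rfl⟩ : ∃ p, n = p + 1 := ⟨n - 1, by omega⟩
  have hA := lemA j (p + 1) (by omega)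
  have hD := lemD (2 * j) (2 * p + 1) (by omega)
  rw [show 2 * (2 * j) + 2 = 2 * (2 * j + 1) from by ring,
    show 2 * (2 * p + 1) + 2 = 4 * (p + 1) from by ring,
    show 2 * j + 1 = 2 * j + 1 from rfl,
    show 2 * p + 1 + 2 = 2 * (p + 1) + 1 from by ring] at hD
  have hm : tmAltMin (p + 1 + 1) = alt (factorAt thueMorse (j + 1) (p + 1 + 1)) := hv
  refine ⟨2 * (2 * j + 1), by omega, ?_⟩
  rw [show 2 * (2 * j + 1) = 2 * (2 * j) + 2 from by ring,
    show 4 * (p + 1) = 2 * (2 * p + 1) + 2 from by ring] at *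
  omega

end TMAux

theorem stmt6 (n : ℕ) (hn : 1 ≤ n) :
    tmAltMin (4 * n) = 2 * n - 1 + tmAltMin (n + 1) := by
  have hne : {a : ℕ | ∃ i ≥ 1, a = alt (factorAt thueMorse i (4 * n))}.Nonempty :=
    ⟨alt (factorAt thueMorse 1 (4 * n)), 1, le_refl 1, rfl⟩
  obtain ⟨i₀, hi₀, hv₀⟩ := Nat.sInf_mem hne
  have h1 : tmAltMin (4 * n) = alt (factorAt thueMorse i₀ (4 * n)) := hv₀
  have h2 := lem_lower n hn i₀ hi₀
  obtain ⟨i, hi, hv⟩ := lem_upper n hn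
  have h3 : tmAltMin (4 * n) ≤ 2 * n - 1 + tmAltMin (n + 1) := by
    rw [← hv]; exact tmAltMin_le _ _ hi
  omega
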